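/- arXiv:2304.03455 — 2 statements merged into one kernel-verified Lean document; each statement's English description precedes it below -/
import Mathlib

section
/- For a Hausdorff space X, the hyperspace CL(X) with the Fell topology is quasi-metrizable if and only if X is hemicompact and metrizable. -/
open Set TopologicalSpace

/-- The hyperspace of nonempty closed subsets of `X`. -/
structure CL (X : Type*) [TopologicalSpace X] where
  carrier : Set X
  nonempty' : carrier.Nonempty
  isClosed' : IsClosed carrier

/-- A quasi-metric: like a metric but without symmetry. -/
def IsQuasiMetric {X : Type*} (d : X → X → ℝ) : Prop :=
  (∀ x y, 0 ≤ d x y) ∧ (∀ x y, d x y = 0 ↔ x = y) ∧ (∀ x y z, d x z ≤ d x y + d y z)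

/-- A space is quasi-metrizable if the balls of some quasi-metric generate its topology. -/
def QuasiMetrizable (X : Type*) [TopologicalSpace X] : Prop :=
  ∃ d : X → X → ℝ, IsQuasiMetric d ∧
    ∀ s : Set X, IsOpen s ↔ ∀ x ∈ s, ∃ ε > 0, {y | d x y < ε} ⊆ s

/-- The set of non-isolated points of `X`. -/
def NI (X : Type*) [TopologicalSpace X] : Set X := {x | ¬ IsOpen ({x} : Set X)}

/-- A subset is countably compact if every countable open cover has a finite subcover. -/
def CountablyCompactSet {Y : Type*} [TopologicalSpace Y] (s : Set Y) : Prop :=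
  ∀ f : ℕ → Set Y, (∀ n, IsOpen (f n)) → s ⊆ ⋃ n, f n → ∃ t : Finset ℕ, s ⊆ ⋃ n ∈ t, f n

/-- A space is hemicompact if some sequence of compact sets is cofinal in the compact sets. -/
def Hemicompact (X : Type*) [TopologicalSpace X] : Prop :=
  ∃ K : ℕ → Set X, (∀ n, IsCompact (K n)) ∧ ∀ L : Set X, IsCompact L → ∃ n, L ⊆ K n

/-- The Fell topology on `CL X`: subbase `U⁻` for `U` open nonempty and `(Kᶜ)⁺` for `K`
compact, `K ≠ X`. -/
def fellTop (X : Type*) [TopologicalSpace X] : TopologicalSpace (CL X) :=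
  generateFrom
    ({S | ∃ U : Set X, IsOpen U ∧ U.Nonempty ∧ S = {A : CL X | (A.carrier ∩ U).Nonempty}} ∪
     {S | ∃ K : Set X, IsCompact K ∧ K ≠ Set.univ ∧ S = {A : CL X | A.carrier ⊆ Kᶜ}})

noncomputable instance (X : Type*) [TopologicalSpace X] : TopologicalSpace (CL X) :=
  fellTop X

/-! ### Auxiliary material for the proof -/

namespace FellQM

open Filter Topology Uniformity

/-! #### Generic quasi-metric lemmas -/

section QMGeneric

variable {Y : Type*}

/-- The "open kernel" of the ball `{y | d x y < ε}`. -/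
def ker (d : Y → Y → ℝ) (x : Y) (ε : ℝ) : Set Y :=
  {y | ∃ δ > 0, ∀ z, d y z < δ → d x z < ε}

theorem mem_ker_self {d : Y → Y → ℝ} {ε : ℝ} (hε : 0 < ε) (x : Y) :
    x ∈ ker d x ε :=
  ⟨ε, hε, fun _ hz => hz⟩

theorem ker_subset_ball {d : Y → Y → ℝ} (hq : IsQuasiMetric d) (x : Y) (ε : ℝ) :
    ker d x ε ⊆ {y | d x y < ε} := by
  rintro y ⟨δ, hδ, h⟩
  have h0 : d y y = 0 := (hq.2.1 y y).2 rfl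
  exact h y (by rw [h0]; exact hδ)

variable [TopologicalSpace Y]

theorem ker_isOpen {d : Y → Y → ℝ} (hq : IsQuasiMetric d)
    (hb : ∀ s : Set Y, IsOpen s ↔ ∀ x ∈ s, ∃ ε > 0, {y | d x y < ε} ⊆ s)
    (x : Y) (ε : ℝ) : IsOpen (ker d x ε) := by
  rw [hb]
  rintro y ⟨δ, hδ, h⟩
  refine ⟨δ / 2, by linarith, ?_⟩
  intro w hw
  have hw' : d y w < δ / 2 := hw
  refine ⟨δ / 2, by linarith, fun z hz => h z ?_⟩
  calc d y z ≤ d y w + d w z := hq.2.2 _ _ _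
    _ < δ := by linarith

/-- Quasi-metrizability is hereditary. -/
theorem qm_subtype (h : QuasiMetrizable Y) (s : Set Y) : QuasiMetrizable s := by
  classical
  obtain ⟨d, hq, hb⟩ := h
  refine ⟨fun a b => d a.1 b.1,
    ⟨fun a b => hq.1 _ _,
     fun a b => ⟨fun h0 => Subtype.ext ((hq.2.1 _ _).1 h0),
       fun e => e ▸ (hq.2.1 _ _).2 rfl⟩,
     fun a b c => hq.2.2 _ _ _⟩, ?_⟩
  intro t
  constructor
  · intro ht a ha
    rw [isOpen_induced_iff] at ht
    obtain ⟨O, hO, rfl⟩ := ht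
    obtain ⟨ε, hε, hball⟩ := (hb O).1 hO a.1 ha
    exact ⟨ε, hε, fun y hy => hball hy⟩
  · intro H
    rw [isOpen_induced_iff]
    choose! ε hε hball using H
    refine ⟨⋃ (a : s) (_ : a ∈ t), ker d a.1 (ε a),
      isOpen_iUnion fun a => isOpen_iUnion fun _ => ker_isOpen hq hb _ _, ?_⟩
    ext y
    simp only [mem_preimage, mem_iUnion]
    constructor
    · rintro ⟨a, ha, hy⟩
      exact hball a ha (ker_subset_ball hq _ _ hy)
    · intro hy
      exact ⟨y, hy, mem_ker_self (hε y hy) _⟩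

/-- Metrizable spaces are quasi-metrizable. -/
theorem qm_of_metrizable [MetrizableSpace Y] : QuasiMetrizable Y := by
  letI := metrizableSpaceMetric Y
  refine ⟨dist, ⟨fun x y => dist_nonneg, fun x y => dist_eq_zero, dist_triangle⟩, ?_⟩
  intro s
  rw [Metric.isOpen_iff]
  refine forall₂_congr fun x hx => exists_congr fun ε => and_congr_right fun hε => ?_
  have : {y | dist x y < ε} = Metric.ball x ε := by
    ext y; simp [Metric.mem_ball, dist_comm]
  rw [this]

theorem clusterPt_seq_frequently {u : ℕ → Y} {p : Y}
    (hp : ClusterPt p (Filter.map u Filter.atTop)) {O : Set Y} (hO : IsOpen O) (hpO : p ∈ O)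
    (m : ℕ) : ∃ n ≥ m, u n ∈ O := by
  have hIci : u '' Ici m ∈ Filter.map u Filter.atTop :=
    Filter.image_mem_map (Filter.Ici_mem_atTop m)
  obtain ⟨z, hz1, hz2⟩ := clusterPt_iff_nonempty.mp hp (hO.mem_nhds hpO) hIci
  obtain ⟨n, hn, rfl⟩ := hz2
  exact ⟨n, hn, hz1⟩

end QMGeneric

/-! #### Compact quasi-metrizable spaces are second countable -/

theorem secondCountable_of_compact_qm {Y : Type*} [TopologicalSpace Y] [CompactSpace Y]
    [T2Space Y] (h : QuasiMetrizable Y) : SecondCountableTopology Y := by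
  classical
  obtain ⟨d, hq, hb⟩ := h
  have hpos : ∀ n : ℕ, (0 : ℝ) < 1 / (n + 1) := fun n => by positivity
  set V : ℕ → Set (Y × Y) :=
    fun n => ⋃ x : Y, (ker d x (1 / (n + 1))) ×ˢ (ker d x (1 / (n + 1))) with hVdef
  have hVo : ∀ n, IsOpen (V n) := fun n =>
    isOpen_iUnion fun x => (ker_isOpen hq hb x _).prod (ker_isOpen hq hb x _)
  have hVd : ∀ n, diagonal Y ⊆ V n := by
    rintro n ⟨z, z'⟩ (rfl : z = z')
    exact mem_iUnion.mpr ⟨z, ⟨mem_ker_self (hpos n) z, mem_ker_self (hpos n) z⟩⟩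
  -- the intersection of the `V n` is the diagonal
  have hVdiag : ⋂ n, V n = diagonal Y := by
    refine Subset.antisymm ?_ (subset_iInter hVd)
    rintro ⟨a, b⟩ hab
    simp only [mem_iInter] at hab
    have hx : ∀ n : ℕ, ∃ x, d x a < 1 / (n + 1) ∧ d x b < 1 / (n + 1) := by
      intro n
      obtain ⟨x, hx⟩ := mem_iUnion.mp (hab n)
      exact ⟨x, ker_subset_ball hq _ _ hx.1, ker_subset_ball hq _ _ hx.2⟩
    choose x hxa hxb using hx
    show a = b
    by_contra hab'
    have hr : 0 < d a b := lt_of_le_of_ne (hq.1 a b) fun e => hab' ((hq.2.1 a b).1 e.symm)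
    obtain ⟨N, hN⟩ := exists_nat_one_div_lt (show (0 : ℝ) < d a b / 2 by linarith)
    have hfar : ∀ n ≥ N, x n ∉ ker d a (d a b / 2) := by
      intro n hn hmem
      have h1 : d a (x n) < d a b / 2 := ker_subset_ball hq _ _ hmem
      have h2 : d a b ≤ d a (x n) + d (x n) b := hq.2.2 a (x n) b
      have h3 : d (x n) b < 1 / (n + 1) := hxb n
      have h4 : (1 : ℝ) / (n + 1) ≤ 1 / (N + 1) := by
        apply one_div_le_one_div_of_le
        · positivity
        · exact_mod_cast Nat.succ_le_succ hn
      linarith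
    haveI : (Filter.map x Filter.atTop).NeBot := Filter.map_neBot
    obtain ⟨p, hp⟩ := exists_clusterPt_of_compactSpace (Filter.map x Filter.atTop)
    have hpa : d p a = 0 := by
      by_contra hne
      have hpa' : 0 < d p a := lt_of_le_of_ne (hq.1 _ _) (Ne.symm hne)
      obtain ⟨m, hm⟩ := exists_nat_one_div_lt (show (0 : ℝ) < d p a / 2 by linarith)
      obtain ⟨n, hn, hmem⟩ := clusterPt_seq_frequently hp
        (ker_isOpen hq hb p (1 / (m + 1))) (mem_ker_self (hpos m) p) m
      have h1 : d p (x n) < 1 / (m + 1) := ker_subset_ball hq _ _ hmem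
      have h2 : d (x n) a < 1 / (n + 1) := hxa n
      have h3 : d p a ≤ d p (x n) + d (x n) a := hq.2.2 _ _ _
      have h4 : (1 : ℝ) / (n + 1) ≤ 1 / (m + 1) := by
        apply one_div_le_one_div_of_le
        · positivity
        · exact_mod_cast Nat.succ_le_succ hn
      linarith
    have hpa2 : p = a := (hq.2.1 p a).1 hpa
    subst hpa2
    obtain ⟨n, hn, hmem⟩ := clusterPt_seq_frequently hp
      (ker_isOpen hq hb p (d p b / 2)) (mem_ker_self (by linarith) p) N
    exact hfar n hn hmem
  -- shrink to a decreasing sequence of open neighborhoods with closures inside `V n`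
  haveI : NormalSpace (Y × Y) := by infer_instance
  have hkey : ∀ t : Set (Y × Y), IsOpen t → diagonal Y ⊆ t →
      ∃ w, IsOpen w ∧ diagonal Y ⊆ w ∧ closure w ⊆ t := by
    intro t ht hd
    obtain ⟨u, h1, h2, h3⟩ := normal_exists_closure_subset isClosed_diagonal ht hd
    exact ⟨u, h1, h2, h3⟩
  choose! g hg1 hg2 hg3 using hkey
  set W : ℕ → Set (Y × Y) :=
    fun n => Nat.rec (g (V 0)) (fun n w => g (w ∩ V (n + 1))) n with hWdef
  have hWprop : ∀ n, IsOpen (W n) ∧ diagonal Y ⊆ W n ∧ closure (W n) ⊆ V n := by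
    intro n
    induction n with
    | zero => exact ⟨hg1 _ (hVo 0) (hVd 0), hg2 _ (hVo 0) (hVd 0), hg3 _ (hVo 0) (hVd 0)⟩
    | succ n ih =>
      have ho : IsOpen (W n ∩ V (n + 1)) := ih.1.inter (hVo _)
      have hdsub : diagonal Y ⊆ W n ∩ V (n + 1) := subset_inter ih.2.1 (hVd _)
      exact ⟨hg1 _ ho hdsub, hg2 _ ho hdsub, (hg3 _ ho hdsub).trans inter_subset_right⟩
  have hWanti : Antitone W := by
    apply antitone_nat_of_succ_le
    intro n
    have ho : IsOpen (W n ∩ V (n + 1)) := (hWprop n).1.inter (hVo _)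
    have hdsub : diagonal Y ⊆ W n ∩ V (n + 1) := subset_inter (hWprop n).2.1 (hVd _)
    exact (subset_closure.trans (hg3 _ ho hdsub)).trans inter_subset_left
  have hWnhds : ∀ n, W n ∈ 𝓝ˢ (diagonal Y) :=
    fun n => ((hWprop n).1.mem_nhdsSet).mpr (hWprop n).2.1
  have hbasis : (𝓝ˢ (diagonal Y)).HasBasis (fun _ : ℕ => True) W := by
    refine ⟨fun t => ⟨fun ht => ?_, fun ⟨n, _, hsub⟩ => Filter.mem_of_superset (hWnhds n) hsub⟩⟩
    obtain ⟨O, hOo, hdO, hOt⟩ := mem_nhdsSet_iff_exists.mp ht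
    by_contra hc
    push_neg at hc
    have hex : ∀ n, ∃ z, z ∈ W n ∧ z ∉ O := by
      intro n
      have : ¬ W n ⊆ O := fun hsub => hc n trivial (hsub.trans hOt)
      obtain ⟨z, hz1, hz2⟩ := not_subset.mp this
      exact ⟨z, hz1, hz2⟩
    choose z hz1 hz2 using hex
    haveI : (Filter.map z Filter.atTop).NeBot := Filter.map_neBot
    obtain ⟨q, hqcl⟩ := exists_clusterPt_of_compactSpace (Filter.map z Filter.atTop)
    have hqO : q ∉ O := by
      have hQ : q ∈ closure Oᶜ := by
        rw [mem_closure_iff]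
        intro N hNo hqN
        obtain ⟨n, _, hmem⟩ := clusterPt_seq_frequently hqcl hNo hqN 0
        exact ⟨z n, hmem, hz2 n⟩
      rwa [(isClosed_compl_iff.mpr hOo).closure_eq] at hQ
    have hqW : ∀ m, q ∈ closure (W m) := by
      intro m
      rw [mem_closure_iff]
      intro N hNo hqN
      obtain ⟨n, hn, hmem⟩ := clusterPt_seq_frequently hqcl hNo hqN m
      exact ⟨z n, hmem, hWanti hn (hz1 n)⟩
    have hqdiag : q ∈ diagonal Y := by
      rw [← hVdiag]
      exact mem_iInter.mpr fun m => (hWprop m).2.2 (hqW m)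
    exact hqO (hdO hqdiag)
  letI u : UniformSpace Y := uniformSpaceOfCompactR1
  have h𝓤 : 𝓤 Y = 𝓝ˢ (diagonal Y) := rfl
  haveI : (𝓤 Y).IsCountablyGenerated := by rw [h𝓤]; exact hbasis.isCountablyGenerated
  haveI : MetrizableSpace Y := UniformSpace.metrizableSpace
  infer_instance

/-! #### Hemicompact + quasi-metrizable implies weakly locally compact -/

theorem wlc {X : Type*} [TopologicalSpace X] (hH : Hemicompact X) (hQ : QuasiMetrizable X) :
    WeaklyLocallyCompactSpace X := by
  classical
  obtain ⟨d, hq, hb⟩ := hQ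
  obtain ⟨K, hKc, hKcof⟩ := hH
  refine ⟨fun x => ?_⟩
  set G : ℕ → Set X := fun n => ⋂ m ∈ Finset.range (n + 1), ker d x (1 / (m + 1)) with hGdef
  have hGo : ∀ n, IsOpen (G n) := fun n =>
    isOpen_biInter_finset fun m _ => ker_isOpen hq hb x _
  have hGx : ∀ n, x ∈ G n := fun n =>
    mem_iInter₂.mpr fun m _ => mem_ker_self (by positivity) x
  by_cases hex : ∃ n, G n ⊆ K n
  · obtain ⟨n, hn⟩ := hex
    exact ⟨K n, hKc n, Filter.mem_of_superset ((hGo n).mem_nhds (hGx n)) hn⟩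
  · push_neg at hex
    have hz : ∀ n, ∃ z, z ∈ G n ∧ z ∉ K n := by
      intro n
      obtain ⟨z, hz1, hz2⟩ := not_subset.mp (hex n)
      exact ⟨z, hz1, hz2⟩
    choose z hz1 hz2 using hz
    have htend : Filter.Tendsto z Filter.atTop (𝓝 x) := by
      intro s hs
      obtain ⟨O, hOsub, hOo, hxO⟩ := mem_nhds_iff.mp hs
      obtain ⟨ε, hε, hball⟩ := (hb O).1 hOo x hxO
      obtain ⟨m, hm⟩ := exists_nat_one_div_lt hε
      rw [Filter.mem_map]
      refine Filter.mem_of_superset (Filter.Ici_mem_atTop m) ?_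
      intro n hn
      have hmem : z n ∈ ker d x (1 / (m + 1)) := by
        have := hz1 n
        rw [hGdef] at this
        exact mem_iInter₂.mp this m (Finset.mem_range.mpr (Nat.lt_succ_of_le hn))
      have : d x (z n) < ε := lt_trans (ker_subset_ball hq _ _ hmem) hm
      exact hOsub (hball this)
    obtain ⟨m, hm⟩ := hKcof _ htend.isCompact_insert_range
    exact absurd (hm (mem_insert_of_mem _ (mem_range_self m))) (hz2 m)

/-! #### Second countability from hemicompactness and second countable compacta -/

theorem secondCountable_aux {X : Type*} [TopologicalSpace X] [WeaklyLocallyCompactSpace X]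
    (hH : Hemicompact X)
    (hsc : ∀ C : Set X, IsCompact C → SecondCountableTopology C) :
    SecondCountableTopology X := by
  classical
  obtain ⟨K, hKc, hKcof⟩ := hH
  have hC : ∀ n, ∃ C, IsCompact C ∧ K n ⊆ interior C := fun n => exists_compact_superset (hKc n)
  choose C hCc hCi using hC
  have hBn : ∀ n : ℕ, ∃ B : Set (Set X), B.Countable ∧ (∀ u ∈ B, IsOpen u) ∧
      ∀ (x : X) (O : Set X), IsOpen O → x ∈ O → x ∈ interior (C n) →
        ∃ u ∈ B, x ∈ u ∧ u ⊆ O := by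
    intro n
    haveI := hsc (C n) (hCc n)
    obtain ⟨b, hbc, -, hbb⟩ := exists_countable_basis (C n)
    have hrep : ∀ u ∈ b, ∃ v : Set X, IsOpen v ∧ Subtype.val ⁻¹' v = u := by
      intro u hu
      have := hbb.isOpen hu
      rwa [isOpen_induced_iff] at this
    choose! v hvo hvp using hrep
    refine ⟨(fun u => v u ∩ interior (C n)) '' b, hbc.image _, ?_, ?_⟩
    · rintro _ ⟨u, hu, rfl⟩
      exact (hvo u hu).inter isOpen_interior
    · intro x O hO hxO hxI
      have hxC : x ∈ C n := interior_subset hxI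
      have h1 : IsOpen (Subtype.val ⁻¹' (O ∩ interior (C n)) : Set (C n)) :=
        (hO.inter isOpen_interior).preimage continuous_subtype_val
      have h2 : (⟨x, hxC⟩ : C n) ∈ Subtype.val ⁻¹' (O ∩ interior (C n)) := ⟨hxO, hxI⟩
      obtain ⟨u, hub, hxu, huO⟩ := hbb.exists_subset_of_mem_open h2 h1
      refine ⟨v u ∩ interior (C n), ⟨u, hub, rfl⟩, ⟨?_, hxI⟩, ?_⟩
      · have : (⟨x, hxC⟩ : C n) ∈ Subtype.val ⁻¹' (v u) := by rw [hvp u hub]; exact hxu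
        exact this
      · rintro y ⟨hyv, hyI⟩
        have hyC : y ∈ C n := interior_subset hyI
        have : (⟨y, hyC⟩ : C n) ∈ u := by
          rw [← hvp u hub]; exact hyv
        exact (huO this).1
  choose B hBcount hBopen hBbasis using hBn
  have hbasis : IsTopologicalBasis (⋃ n, B n) := by
    refine isTopologicalBasis_of_isOpen_of_nhds ?_ ?_
    · intro u hu
      obtain ⟨n, hun⟩ := mem_iUnion.mp hu
      exact hBopen n u hun
    · intro x O hxO hO
      obtain ⟨n, hn⟩ := hKcof {x} isCompact_singleton
      have hxI : x ∈ interior (C n) := hCi n (hn rfl)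
      obtain ⟨u, hub, hxu, huO⟩ := hBbasis n x O hO hxO hxI
      exact ⟨u, mem_iUnion.mpr ⟨n, hub⟩, hxu, huO⟩
  exact hbasis.secondCountableTopology (countable_iUnion hBcount)

/-! #### Fell topology basics -/

section Fell

variable {X : Type*} [TopologicalSpace X]

def hitting (U : Set X) : Set (CL X) := {A : CL X | (A.carrier ∩ U).Nonempty}

def missing (K : Set X) : Set (CL X) := {A : CL X | A.carrier ⊆ Kᶜ}

def fellSub (X : Type*) [TopologicalSpace X] : Set (Set (CL X)) :=
  {S | ∃ U : Set X, IsOpen U ∧ U.Nonempty ∧ S = {A : CL X | (A.carrier ∩ U).Nonempty}} ∪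
  {S | ∃ K : Set X, IsCompact K ∧ K ≠ Set.univ ∧ S = {A : CL X | A.carrier ⊆ Kᶜ}}

theorem fellTop_eq (X : Type*) [TopologicalSpace X] :
    (inferInstance : TopologicalSpace (CL X)) = generateFrom (fellSub X) := rfl

theorem CL.ext' {A B : CL X} (h : A.carrier = B.carrier) : A = B := by
  cases A; cases B; simpa using h

theorem compl_hitting (S : Set X) : (hitting S)ᶜ = missing S := by
  ext D
  simp only [mem_compl_iff, hitting, missing, mem_setOf_eq, not_nonempty_iff_eq_empty]
  constructor
  · intro h
    exact subset_compl_iff_disjoint_right.mpr (disjoint_iff_inter_eq_empty.mpr h)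
  · intro h
    exact disjoint_iff_inter_eq_empty.mp (subset_compl_iff_disjoint_right.mp h)

theorem compl_missing (S : Set X) : (missing S)ᶜ = hitting S := by
  rw [← compl_hitting, compl_compl]

theorem isOpen_hitting {U : Set X} (hU : IsOpen U) (hne : U.Nonempty) : IsOpen (hitting U) :=
  isOpen_generateFrom_of_mem (Or.inl ⟨U, hU, hne, rfl⟩)

theorem isOpen_missing {K : Set X} (hK : IsCompact K) (hne : K ≠ univ) : IsOpen (missing K) :=
  isOpen_generateFrom_of_mem (Or.inr ⟨K, hK, hne, rfl⟩)

theorem hitting_empty : hitting (∅ : Set X) = ∅ := by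
  ext A; simp [hitting]

theorem missing_univ : missing (univ : Set X) = ∅ := by
  ext A
  simp only [missing, mem_setOf_eq, compl_univ, subset_empty_iff, mem_empty_iff_false,
    iff_false]
  exact A.nonempty'.ne_empty

theorem isOpen_hitting_any {U : Set X} (hU : IsOpen U) : IsOpen (hitting U) := by
  rcases eq_empty_or_nonempty U with rfl | hne
  · rw [hitting_empty]; exact isOpen_empty
  · exact isOpen_hitting hU hne

theorem isOpen_missing_any {K : Set X} (hK : IsCompact K) : IsOpen (missing K) := by
  by_cases h : K = univ
  · subst h; rw [missing_univ]; exact isOpen_empty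
  · exact isOpen_missing hK h

theorem fell_basis (X : Type*) [TopologicalSpace X] :
    IsTopologicalBasis ((fun f : Set (Set (CL X)) => ⋂₀ f) ''
      {f : Set (Set (CL X)) | f.Finite ∧ f ⊆ fellSub X}) :=
  isTopologicalBasis_of_subbasis (fellTop_eq X)

variable [T2Space X]

noncomputable def singCL (x : X) : CL X := ⟨{x}, singleton_nonempty x, isClosed_singleton⟩

noncomputable def pairCL (x y : X) : CL X :=
  ⟨{x, y}, ⟨x, by simp⟩, (Set.toFinite _).isClosed⟩

/-- Given a finite subfamily of the subbasis, we may collect the compact parts. -/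
theorem exists_compactL (f : Set (Set (CL X))) (hfin : f.Finite) (hsub : f ⊆ fellSub X) :
    ∃ L : Set X, IsCompact L ∧ ∀ t ∈ f,
      (∃ K, IsCompact K ∧ K ⊆ L ∧ t = missing K) ∨
      (∃ U, IsOpen U ∧ U.Nonempty ∧ t = hitting U) := by
  classical
  set k : Set (CL X) → Set X :=
    fun t => if h : ∃ K, IsCompact K ∧ t = missing K then h.choose else ∅ with hk
  refine ⟨⋃ t ∈ f, k t, hfin.isCompact_biUnion fun t _ => ?_, fun t ht => ?_⟩
  · by_cases h : ∃ K, IsCompact K ∧ t = missing K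
    · rw [hk]; simp only [dif_pos h]; exact h.choose_spec.1
    · rw [hk]; simp only [dif_neg h]; exact isCompact_empty
  · rcases hsub ht with ⟨U, h1, h2, h3⟩ | ⟨K, h1, h2, h3⟩
    · exact Or.inr ⟨U, h1, h2, h3⟩
    · have h : ∃ K, IsCompact K ∧ t = missing K := ⟨K, h1, h3⟩
      have hkt : k t = h.choose := by rw [hk]; simp only [dif_pos h]
      refine Or.inl ⟨h.choose, h.choose_spec.1, ?_, h.choose_spec.2⟩
      rw [← hkt]
      exact subset_biUnion_of_mem (u := fun t => k t) ht

/-- Key step: a countable cofinal family of compact sets missing a fixed point `x`. -/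
theorem cofinal_compacts_of_qm (h : QuasiMetrizable (CL X)) (x : X) :
    ∃ L : ℕ → Set X, (∀ n, IsCompact (L n)) ∧
      ∀ K : Set X, IsCompact K → x ∉ K → ∃ n, K ⊆ L n := by
  classical
  obtain ⟨d, hq, hb⟩ := h
  have key : ∀ n : ℕ, ∃ L : Set X, IsCompact L ∧
      ∀ y : X, y ∉ L → d (singCL x) (pairCL x y) < 1 / (n + 1) := by
    intro n
    have hker : IsOpen (ker d (singCL x) (1 / (n + 1))) := ker_isOpen hq hb _ _
    have hmem : singCL x ∈ ker d (singCL x) (1 / (n + 1)) :=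
      mem_ker_self (by positivity) _
    obtain ⟨bs, ⟨f, ⟨hfin, hsub⟩, rfl⟩, hxb, hbsub⟩ :=
      (fell_basis X).exists_subset_of_mem_open hmem hker
    obtain ⟨L, hLc, hrep⟩ := exists_compactL f hfin hsub
    refine ⟨L, hLc, fun y hyL => ?_⟩
    have hpair : pairCL x y ∈ (⋂₀ f : Set (CL X)) := by
      intro t ht
      have hxt : singCL x ∈ t := hxb t ht
      rcases hrep t ht with ⟨K, hKc, hKL, rfl⟩ | ⟨U, hUo, hUne, rfl⟩
      · have hxK : x ∉ K := by
          have := hxt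
          simp only [missing, mem_setOf_eq, singCL] at this
          exact (this rfl : x ∈ Kᶜ)
        intro z hz
        have hz' : z = x ∨ z ∈ ({y} : Set X) := hz
        rcases hz' with rfl | hz'
        · exact hxK
        · have hz'' : z = y := hz'
          subst hz''
          exact fun hzK => hyL (hKL hzK)
      · have hxU : x ∈ U := by
          obtain ⟨w, hw1, hw2⟩ := hxt
          have hw1' : w = x := hw1
          rwa [hw1'] at hw2
        exact ⟨x, mem_insert x _, hxU⟩
    exact ker_subset_ball hq _ _ (hbsub hpair)
  choose L hLc hLp using key
  refine ⟨L, hLc, fun K hK hxK => ?_⟩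
  have hKne : K ≠ univ := fun h => hxK (h ▸ mem_univ x)
  have hop : IsOpen (missing K) := isOpen_missing hK hKne
  have hmem : singCL x ∈ missing K := by
    intro z hz
    have hz' : z = x := hz
    subst hz'
    exact hxK
  obtain ⟨ε, hε, hball⟩ := (hb (missing K)).1 hop _ hmem
  obtain ⟨n, hn⟩ := exists_nat_one_div_lt hε
  refine ⟨n, fun y hy => ?_⟩
  by_contra hyL
  have : pairCL x y ∈ missing K := hball (lt_trans (hLp n y hyL) hn)
  exact this (mem_insert_iff.mpr (Or.inr (mem_singleton y))) hy

theorem hemicompact_of_qm (h : QuasiMetrizable (CL X)) : Hemicompact X := by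
  rcases subsingleton_or_nontrivial X with hs | hnt
  · exact ⟨fun _ => univ, fun _ => Set.subsingleton_univ.finite.isCompact,
      fun L _ => ⟨0, subset_univ L⟩⟩
  · obtain ⟨x, y, hxy⟩ := exists_pair_ne X
    obtain ⟨L, hLc, hLp⟩ := cofinal_compacts_of_qm h x
    obtain ⟨M, hMc, hMp⟩ := cofinal_compacts_of_qm h y
    obtain ⟨U, V, hUo, hVo, hxU, hyV, hUV⟩ := t2_separation hxy
    refine ⟨fun n => L n.unpair.1 ∪ M n.unpair.2,
      fun n => (hLc _).union (hMc _), fun K hK => ?_⟩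
    have h1 : IsCompact (K \ U) := hK.diff hUo
    have h2 : IsCompact (K \ V) := hK.diff hVo
    obtain ⟨a, ha⟩ := hLp _ h1 fun hc => hc.2 hxU
    obtain ⟨b, hb2⟩ := hMp _ h2 fun hc => hc.2 hyV
    refine ⟨Nat.pair a b, fun z hz => ?_⟩
    simp only [Nat.unpair_pair]
    by_cases hzU : z ∈ U
    · have hzV : z ∉ V := fun hzV => (hUV.le_bot ⟨hzU, hzV⟩)
      exact Or.inr (hb2 ⟨hz, hzV⟩)
    · exact Or.inl (ha ⟨hz, hzU⟩)

/-- The singleton embedding transfers quasi-metrizability down to `X`. -/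
theorem qm_X_of_qm_CL (h : QuasiMetrizable (CL X)) : QuasiMetrizable X := by
  classical
  obtain ⟨d, hq, hb⟩ := h
  have hcont : Continuous (singCL : X → CL X) := by
    have hc : Continuous[_, generateFrom (fellSub X)] (singCL : X → CL X) := by
      rw [continuous_generateFrom_iff]
      rintro s (⟨U, hUo, hUne, rfl⟩ | ⟨K, hKc, hKu, rfl⟩)
      · have : (singCL : X → CL X) ⁻¹' {A : CL X | (A.carrier ∩ U).Nonempty} = U := by
          ext z
          simp [singCL, Set.singleton_inter_nonempty]
        rw [this]; exact hUo
      · have : (singCL : X → CL X) ⁻¹' {A : CL X | A.carrier ⊆ Kᶜ} = Kᶜ := by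
          ext z
          simp [singCL, Set.singleton_subset_iff]
        rw [this]; exact hKc.isClosed.isOpen_compl
    exact hc
  refine ⟨fun a b => d (singCL a) (singCL b),
    ⟨fun a b => hq.1 _ _,
     fun a b => ⟨fun h0 => ?_, fun e => e ▸ (hq.2.1 _ _).2 rfl⟩,
     fun a b c => hq.2.2 _ _ _⟩, ?_⟩
  · have hs := (hq.2.1 _ _).1 h0
    have := congrArg CL.carrier hs
    simpa [singCL] using this
  · intro s
    constructor
    · intro hs a ha
      have hso : IsOpen (hitting s) := isOpen_hitting hs ⟨a, ha⟩
      have hmem : singCL a ∈ hitting s := ⟨a, rfl, ha⟩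
      obtain ⟨ε, hε, hball⟩ := (hb (hitting s)).1 hso _ hmem
      refine ⟨ε, hε, fun y hy => ?_⟩
      have hyh : singCL y ∈ hitting s := hball hy
      obtain ⟨w, hw1, hw2⟩ := hyh
      have hw1' : w = y := hw1
      rwa [hw1'] at hw2
    · intro H
      choose! ε hε hball using H
      have hopen : IsOpen (⋃ (a : X) (_ : a ∈ s), ker d (singCL a) (ε a)) :=
        isOpen_iUnion fun a => isOpen_iUnion fun _ => ker_isOpen hq hb _ _
      have hseq : s = (singCL : X → CL X) ⁻¹'
          (⋃ (a : X) (_ : a ∈ s), ker d (singCL a) (ε a)) := by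
        ext y
        simp only [mem_preimage, mem_iUnion]
        constructor
        · intro hy
          exact ⟨y, hy, mem_ker_self (hε y hy) _⟩
        · rintro ⟨a, ha, hk⟩
          exact hball a ha (ker_subset_ball hq _ _ hk)
      rw [hseq]
      exact hopen.preimage hcont

/-! #### The Fell topology for locally compact Hausdorff `X` -/

variable [LocallyCompactSpace X]

theorem fell_t2 : T2Space (CL X) := by
  have key : ∀ A B : CL X, (A.carrier \ B.carrier).Nonempty →
      ∃ u v : Set (CL X), IsOpen u ∧ IsOpen v ∧ A ∈ u ∧ B ∈ v ∧ Disjoint u v := by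
    rintro A B ⟨x, hxA, hxB⟩
    obtain ⟨L, hLc, hxL, hLB⟩ := exists_compact_between isCompact_singleton
      B.isClosed'.isOpen_compl (singleton_subset_iff.mpr hxB)
    have hLne : L ≠ univ := by
      intro h
      obtain ⟨w, hw⟩ := B.nonempty'
      exact hLB (h ▸ mem_univ w) hw
    refine ⟨hitting (interior L), missing L,
      isOpen_hitting_any isOpen_interior, isOpen_missing hLc hLne,
      ⟨x, hxA, hxL rfl⟩, fun w hw hwL => hLB hwL hw, ?_⟩
    rw [Set.disjoint_left]
    rintro D ⟨w, hwD, hwL⟩ hD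
    exact hD hwD (interior_subset hwL)
  constructor
  intro A B hAB
  have hne : (A.carrier \ B.carrier).Nonempty ∨ (B.carrier \ A.carrier).Nonempty := by
    by_contra hc
    push_neg at hc
    obtain ⟨h1, h2⟩ := hc
    rw [diff_eq_empty] at h1 h2
    exact hAB (CL.ext' (h1.antisymm h2))
  rcases hne with hne | hne
  · exact key A B hne
  · obtain ⟨u, v, h1, h2, h3, h4, h5⟩ := key B A hne
    exact ⟨v, u, h2, h1, h4, h3, h5.symm⟩

theorem fell_regular : RegularSpace (CL X) := by
  classical
  apply RegularSpace.of_exists_mem_nhds_isClosed_subset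
  intro A s hs
  obtain ⟨O, hOsub, hOo, hAO⟩ := mem_nhds_iff.mp hs
  obtain ⟨bs, ⟨f, ⟨hfin, hsub⟩, rfl⟩, hAb, hbO⟩ :=
    (fell_basis X).exists_subset_of_mem_open hAO hOo
  have hchoice : ∀ t ∈ f, ∃ N F : Set (CL X),
      IsOpen N ∧ A ∈ N ∧ IsClosed F ∧ N ⊆ F ∧ F ⊆ t := by
    intro t ht
    have hAt : A ∈ t := hAb t ht
    rcases hsub ht with ⟨U, hUo, hUne, rfl⟩ | ⟨K, hKc, hKu, rfl⟩
    · obtain ⟨z, hzA, hzU⟩ := hAt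
      obtain ⟨C, hCc, hzC, hCU⟩ := exists_compact_between isCompact_singleton hUo
        (singleton_subset_iff.mpr hzU)
      refine ⟨hitting (interior C), hitting C,
        isOpen_hitting_any isOpen_interior, ⟨z, hzA, hzC rfl⟩, ?_, ?_, ?_⟩
      · rw [← isOpen_compl_iff, compl_hitting]
        exact isOpen_missing_any hCc
      · rintro D ⟨w, hwD, hwC⟩
        exact ⟨w, hwD, interior_subset hwC⟩
      · rintro D ⟨w, hwD, hwC⟩
        exact ⟨w, hwD, hCU hwC⟩
    · have hAK : A.carrier ⊆ Kᶜ := hAt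
      obtain ⟨C, hCc, hKC, hCA⟩ := exists_compact_between hKc A.isClosed'.isOpen_compl
        (fun z hz hzA => hAK hzA hz)
      have hCne : C ≠ univ := by
        intro h
        obtain ⟨w, hw⟩ := A.nonempty'
        exact hCA (h ▸ mem_univ w) hw
      refine ⟨missing C, missing (interior C),
        isOpen_missing hCc hCne, fun w hw hwC => hCA hwC hw, ?_, ?_, ?_⟩
      · rw [← isOpen_compl_iff, compl_missing]
        exact isOpen_hitting_any isOpen_interior
      · intro D hD w hw hwC
        exact hD hw (interior_subset hwC)
      · intro D hD w hw hwK
        exact hD hw (hKC hwK)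
  choose! N F h1 h2 h3 h4 h5 using hchoice
  refine ⟨⋂ t ∈ f, F t, ?_, ?_, ?_⟩
  · have hNopen : IsOpen (⋂ t ∈ f, N t) := hfin.isOpen_biInter fun t ht => h1 t ht
    have hAmem : A ∈ ⋂ t ∈ f, N t := mem_iInter₂.mpr fun t ht => h2 t ht
    exact Filter.mem_of_superset (hNopen.mem_nhds hAmem)
      (iInter₂_mono fun t ht => h4 t ht)
  · exact isClosed_biInter fun t ht => h3 t ht
  · intro D hD
    have : D ∈ (⋂₀ f : Set (CL X)) := fun t ht => h5 t ht (mem_iInter₂.mp hD t ht)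
    exact hOsub (hbO this)

theorem fell_secondCountable [SecondCountableTopology X] :
    SecondCountableTopology (CL X) := by
  classical
  obtain ⟨b, hbc, -, hbasis⟩ := exists_countable_basis X
  set goodL : Set (Set X) :=
    {L | (∃ t : Set (Set X), t.Finite ∧ t ⊆ b ∧ (∀ u ∈ t, IsCompact (closure u)) ∧
      L = ⋃ u ∈ t, closure u) ∧ L ≠ univ} with hgoodL
  set 𝒮 : Set (Set (CL X)) :=
    (hitting '' {u | u ∈ b ∧ u.Nonempty}) ∪ (missing '' goodL) with h𝒮
  have hcount : 𝒮.Countable := by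
    apply Countable.union
    · exact ((hbc.mono (sep_subset _ _)).image _)
    · apply Countable.image
      have hsub : goodL ⊆ (fun t : Set (Set X) => ⋃ u ∈ t, closure u) ''
          {t | t.Finite ∧ t ⊆ b} := by
        rintro L ⟨⟨t, ht1, ht2, _, rfl⟩, -⟩
        exact ⟨t, ⟨ht1, ht2⟩, rfl⟩
      exact ((countable_setOf_finite_subset hbc).image _).mono hsub
  have h𝒮sub : 𝒮 ⊆ fellSub X := by
    rintro S (⟨u, ⟨hub, hune⟩, rfl⟩ | ⟨L, ⟨⟨t, ht1, ht2, ht3, rfl⟩, hLu⟩, rfl⟩)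
    · exact Or.inl ⟨u, hbasis.isOpen hub, hune, rfl⟩
    · exact Or.inr ⟨_, ht1.isCompact_biUnion ht3, hLu, rfl⟩
  have hgen : ∀ S ∈ fellSub X, TopologicalSpace.GenerateOpen 𝒮 S := by
    rintro S (⟨U, hUo, hUne, rfl⟩ | ⟨K, hKc, hKu, rfl⟩)
    · -- hitting sets
      have hU : {A : CL X | (A.carrier ∩ U).Nonempty} =
          ⋃₀ {S | ∃ u, (u ∈ b ∧ u ⊆ U ∧ u.Nonempty) ∧ S = hitting u} := by
        ext A
        constructor
        · rintro ⟨z, hzA, hzU⟩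
          obtain ⟨u, hub, hzu, huU⟩ := hbasis.exists_subset_of_mem_open hzU hUo
          exact ⟨hitting u, ⟨u, ⟨hub, huU, ⟨z, hzu⟩⟩, rfl⟩, ⟨z, hzA, hzu⟩⟩
        · rintro ⟨S, ⟨u, ⟨hub, huU, hune⟩, rfl⟩, ⟨z, hzA, hzu⟩⟩
          exact ⟨z, hzA, huU hzu⟩
      rw [hU]
      apply TopologicalSpace.GenerateOpen.sUnion
      rintro S ⟨u, ⟨hub, huU, hune⟩, rfl⟩
      exact TopologicalSpace.GenerateOpen.basic _ (Or.inl ⟨u, ⟨hub, hune⟩, rfl⟩)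
    · -- missing sets
      have hK : {A : CL X | A.carrier ⊆ Kᶜ} =
          ⋃₀ {S | ∃ L, (L ∈ goodL ∧ K ⊆ L) ∧ S = missing L} := by
        ext A
        constructor
        · intro hA
          -- cover K with basic sets whose closures are compact and miss A
          have hcov : ∀ z ∈ K, ∃ u : Set X,
              (u ∈ b ∧ IsCompact (closure u) ∧ closure u ⊆ A.carrierᶜ) ∧ z ∈ u := by
            intro z hz
            have hzA : z ∈ A.carrierᶜ := fun hzA => hA hzA hz
            obtain ⟨C, hCc, hzC, hCA⟩ := exists_compact_between isCompact_singleton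
              A.isClosed'.isOpen_compl (singleton_subset_iff.mpr hzA)
            obtain ⟨u, hub, hzu, huC⟩ := hbasis.exists_subset_of_mem_open (hzC rfl)
              isOpen_interior
            have hclu : closure u ⊆ C :=
              closure_minimal (huC.trans interior_subset) hCc.isClosed
            exact ⟨u, ⟨hub, hCc.of_isClosed_subset isClosed_closure hclu,
              hclu.trans hCA⟩, hzu⟩
          set ι := {u : Set X // u ∈ b ∧ IsCompact (closure u) ∧ closure u ⊆ A.carrierᶜ}
          have hcover : K ⊆ ⋃ i : ι, i.1 := by
            intro z hz
            obtain ⟨u, hu, hzu⟩ := hcov z hz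
            exact mem_iUnion.mpr ⟨⟨u, hu⟩, hzu⟩
          obtain ⟨tf, htf⟩ := hKc.elim_finite_subcover (fun i : ι => i.1)
            (fun i => hbasis.isOpen i.2.1) hcover
          set T : Set (Set X) := Subtype.val '' (↑tf : Set ι) with hT
          have hTfin : T.Finite := (tf.finite_toSet).image _
          set L : Set X := ⋃ u ∈ T, closure u with hL
          have hLA : L ⊆ A.carrierᶜ := by
            intro w hw
            simp only [hL, mem_iUnion] at hw
            obtain ⟨u, hu, hw⟩ := hw
            obtain ⟨i, _, rfl⟩ := hu
            exact i.2.2.2 hw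
          have hLgood : L ∈ goodL := by
            refine ⟨⟨T, hTfin, ?_, ?_, rfl⟩, ?_⟩
            · rintro u ⟨i, _, rfl⟩; exact i.2.1
            · rintro u ⟨i, _, rfl⟩; exact i.2.2.1
            · intro h
              obtain ⟨w, hw⟩ := A.nonempty'
              exact hLA (h ▸ mem_univ w) hw
          have hKL : K ⊆ L := by
            intro z hz
            obtain ⟨i, hi, hzi⟩ := mem_iUnion₂.mp (htf hz)
            exact mem_iUnion₂.mpr ⟨i.1, ⟨i, hi, rfl⟩, subset_closure hzi⟩
          refine ⟨missing L, ⟨L, ⟨hLgood, hKL⟩, rfl⟩, ?_⟩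
          intro w hw hwL
          exact hLA hwL hw
        · rintro ⟨S, ⟨L, ⟨hLgood, hKL⟩, rfl⟩, hAS⟩
          intro w hw hwK
          exact hAS hw (hKL hwK)
      rw [hK]
      apply TopologicalSpace.GenerateOpen.sUnion
      rintro S ⟨L, ⟨hLgood, hKL⟩, rfl⟩
      exact TopologicalSpace.GenerateOpen.basic _ (Or.inr ⟨L, hLgood, rfl⟩)
  refine ⟨⟨𝒮, hcount, le_antisymm ?_ ?_⟩⟩
  · exact generateFrom_anti h𝒮sub
  · exact le_generateFrom fun S hS => hgen S hS

end Fell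

end FellQM

open FellQM

theorem quasiMetrizable_CL_fell_iff {X : Type*} [TopologicalSpace X] [T2Space X] :
    QuasiMetrizable (CL X) ↔
      (Hemicompact X ∧ TopologicalSpace.MetrizableSpace X) := by
  constructor
  · intro h
    have hH : Hemicompact X := hemicompact_of_qm h
    have hQX : QuasiMetrizable X := qm_X_of_qm_CL h
    refine ⟨hH, ?_⟩
    haveI := wlc hH hQX
    have hsc : ∀ C : Set X, IsCompact C → SecondCountableTopology C := by
      intro C hC
      haveI : CompactSpace C := isCompact_iff_compactSpace.mp hC
      exact secondCountable_of_compact_qm (qm_subtype hQX C)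
    haveI := secondCountable_aux hH hsc
    haveI : RegularSpace X := inferInstance
    haveI : T3Space X := {}
    infer_instance
  · rintro ⟨hH, hM⟩
    haveI := hM
    have hQX : QuasiMetrizable X := qm_of_metrizable
    haveI := wlc hH hQX
    haveI : LocallyCompactSpace X := inferInstance
    have hsc : ∀ C : Set X, IsCompact C → SecondCountableTopology C := by
      intro C hC
      haveI : CompactSpace C := isCompact_iff_compactSpace.mp hC
      infer_instance
    haveI := secondCountable_aux hH hsc
    haveI : T2Space (CL X) := fell_t2
    haveI : RegularSpace (CL X) := fell_regular
    haveI : SecondCountableTopology (CL X) := fell_secondCountable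
    haveI : T3Space (CL X) := {}
    haveI : MetrizableSpace (CL X) := inferInstance
    exact qm_of_metrizable
end

section
/- If the space F_2(X) of nonempty subsets of X with at most 2 points, with the subspace Fell topology, is quasi-metrizable, then X is hemicompact, locally compact, and metrizable. -/
open Set TopologicalSpace

/-! ### Auxiliary theory of compatible quasi-metrics -/

section QMAux

open Filter Topology Uniformity

variable {Z : Type*} [TopologicalSpace Z]

/-- `ρ` is a quasi-metric compatible with the topology of `Z`. -/
def QMCompat (ρ : Z → Z → ℝ) : Prop :=
  IsQuasiMetric ρ ∧ ∀ s : Set Z, IsOpen s ↔ ∀ x ∈ s, ∃ ε > 0, {y | ρ x y < ε} ⊆ s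

theorem QMCompat.refl {ρ : Z → Z → ℝ} (h : QMCompat ρ) (x : Z) : ρ x x = 0 :=
  (h.1.2.1 x x).2 rfl

/-- Every ball of a compatible quasi-metric contains an open neighborhood of its center. -/
theorem QMCompat.openCore {ρ : Z → Z → ℝ} (h : QMCompat ρ) (x : Z) {ε : ℝ} (hε : 0 < ε) :
    ∃ O : Set Z, IsOpen O ∧ x ∈ O ∧ O ⊆ {y | ρ x y < ε} := by
  obtain ⟨⟨hpos, heq, htri⟩, hcomp⟩ := h
  refine ⟨{w | ∃ δ > 0, {y | ρ w y < δ} ⊆ {y | ρ x y < ε}}, ?_, ⟨ε, hε, fun y hy => hy⟩, ?_⟩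
  · rw [hcomp]
    rintro w ⟨δ, hδ, hsub⟩
    refine ⟨δ / 2, by linarith, fun z hz => ?_⟩
    refine ⟨δ / 2, by linarith, fun u hu => hsub ?_⟩
    have := htri w z u
    simp only [mem_setOf_eq] at hz hu ⊢
    linarith
  · rintro w ⟨δ, hδ, hsub⟩
    exact hsub (by simpa [(heq w w).2 rfl] using hδ)

/-- Restriction of a compatible quasi-metric to a subspace is compatible. -/
theorem QMCompat.restrict {ρ : Z → Z → ℝ} (h : QMCompat ρ) (S : Set Z) :
    QMCompat (fun a b : S => ρ a b) := by
  obtain ⟨⟨hpos, heq, htri⟩, -⟩ := id h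
  constructor
  · exact ⟨fun a b => hpos _ _,
      fun a b => (heq _ _).trans ⟨fun hab => Subtype.ext hab, fun hab => by rw [hab]⟩,
      fun a b c => htri _ _ _⟩
  · intro s
    constructor
    · rintro hs a ha
      obtain ⟨t, ht, rfl⟩ := isOpen_induced_iff.1 hs
      obtain ⟨ε, hε, hsub⟩ := (h.2 t).1 ht a ha
      exact ⟨ε, hε, fun b hb => hsub hb⟩
    · intro hs
      choose! ε hε hball using hs
      have key : ∀ a : S, a ∈ s → ∃ O : Set Z, IsOpen O ∧ (a : Z) ∈ O ∧
          ∀ b : S, (b : Z) ∈ O → b ∈ s := by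
        intro a ha
        obtain ⟨O, hOo, hOx, hOb⟩ := h.openCore (a : Z) (hε a ha)
        exact ⟨O, hOo, hOx, fun b hb => hball a ha (hOb hb)⟩
      choose! O hOo hOx hOb using key
      have hseq : s = Subtype.val ⁻¹' (⋃ a ∈ s, O a) := by
        apply Subset.antisymm
        · intro a ha
          exact mem_iUnion₂.2 ⟨a, ha, hOx a ha⟩
        · intro b hb
          obtain ⟨a, ha, hbO⟩ := mem_iUnion₂.1 hb
          exact hOb a ha b hbO
      rw [hseq]
      exact (isOpen_biUnion fun a ha => hOo a ha).preimage continuous_subtype_val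

/-- A compact Hausdorff space admitting a compatible quasi-metric is metrizable. -/
theorem QMCompat.metrizableSpace [CompactSpace Z] [T2Space Z] {ρ : Z → Z → ℝ}
    (h : QMCompat ρ) : MetrizableSpace Z := by
  classical
  obtain ⟨⟨hpos, heq, htri⟩, hcomp⟩ := id h
  have core : ∀ (x : Z) (n : ℕ), ∃ O : Set Z, IsOpen O ∧ x ∈ O ∧
      O ⊆ {y | ρ x y < 1 / (n + 1)} := fun x n => h.openCore x (by positivity)
  choose O hOo hOx hOb using core
  set W : ℕ → Set (Z × Z) := fun n => ⋃ z, (O z n) ×ˢ (O z n) with hWdef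
  have hWo : ∀ n, IsOpen (W n) := fun n => isOpen_iUnion fun z => (hOo z n).prod (hOo z n)
  have hWd : ∀ n, diagonal Z ⊆ W n := by
    rintro n ⟨p, q⟩ (rfl : p = q)
    exact mem_iUnion.2 ⟨p, hOx p n, hOx p n⟩
  -- the W n intersect in the diagonal
  have hWint : ∀ p q : Z, (∀ n, (p, q) ∈ W n) → p = q := by
    intro p q hpq
    have hz : ∀ n, ∃ z, p ∈ O z n ∧ q ∈ O z n := by
      intro n
      obtain ⟨z, hz⟩ := mem_iUnion.1 (hpq n)
      exact ⟨z, hz.1, hz.2⟩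
    choose z hzp hzq using hz
    obtain ⟨a, ha⟩ := exists_clusterPt_of_compactSpace (Filter.map z atTop)
    have ha' : MapClusterPt a atTop z := ha
    have key : ∀ b : Z, (∀ n, ρ (z n) b < 1 / (n + 1)) → a = b := by
      intro b hb
      have h0 : ρ a b ≤ 0 := by
        by_contra h0'
        push_neg at h0'
        obtain ⟨m, hm⟩ := exists_nat_one_div_lt (show (0 : ℝ) < ρ a b / 2 by linarith)
        have hfreq : ∃ᶠ n in atTop, z n ∈ O a m :=
          (mapClusterPt_iff_frequently.1 ha') _ ((hOo a m).mem_nhds (hOx a m))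
        obtain ⟨n, hnO, hnm⟩ := (hfreq.and_eventually (eventually_ge_atTop m)).exists
        have h1 : ρ a (z n) < ρ a b / 2 := lt_trans (hOb a m hnO) hm
        have h2 : ρ (z n) b < ρ a b / 2 := by
          refine lt_of_lt_of_le (hb n) (le_trans ?_ (le_of_lt hm))
          have hcast : (m : ℝ) + 1 ≤ (n : ℝ) + 1 := by
            have := (Nat.cast_le (α := ℝ)).2 hnm
            linarith
          exact one_div_le_one_div_of_le (by positivity) hcast
        have := htri a (z n) b
        linarith
      exact (heq a b).1 (le_antisymm h0 (hpos a b))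
    have hp : a = p := key p fun n => hOb (z n) n (hzp n)
    have hq : a = q := key q fun n => hOb (z n) n (hzq n)
    exact hp ▸ hq
  -- sandwich construction
  have step : ∀ G : Set (Z × Z), IsOpen G → diagonal Z ⊆ G →
      ∃ H : Set (Z × Z), (IsOpen H ∧ diagonal Z ⊆ H) ∧ closure H ⊆ G := by
    intro G hG hdG
    obtain ⟨H, h1, h2, h3⟩ := normal_exists_closure_subset isClosed_diagonal hG hdG
    exact ⟨H, ⟨h1, h2⟩, h3⟩
  choose! g hg1 hg2 using step
  let T : ℕ → Set (Z × Z) := fun n =>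
    Nat.rec (g (W 0)) (fun k prev => g (prev ∩ W (k + 1))) n
  have hTprop : ∀ n, IsOpen (T n) ∧ diagonal Z ⊆ T n := by
    intro n
    induction n with
    | zero => exact hg1 (W 0) (hWo 0) (hWd 0)
    | succ k ih => exact hg1 _ (ih.1.inter (hWo (k + 1))) (subset_inter ih.2 (hWd (k + 1)))
  have hTcl : ∀ n, closure (T (n + 1)) ⊆ T n ∩ W (n + 1) := fun n =>
    hg2 _ ((hTprop n).1.inter (hWo (n + 1))) (subset_inter (hTprop n).2 (hWd (n + 1)))
  have hTcl0 : closure (T 0) ⊆ W 0 := hg2 _ (hWo 0) (hWd 0)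
  have hTclW : ∀ n, closure (T n) ⊆ W n := by
    intro n
    cases n with
    | zero => exact hTcl0
    | succ k => exact (hTcl k).trans inter_subset_right
  have hTdec : ∀ n, closure (T (n + 1)) ⊆ closure (T n) := fun n =>
    ((hTcl n).trans inter_subset_left).trans subset_closure
  have hbasis : (𝓝ˢ (diagonal Z)).HasBasis (fun _ : ℕ => True) T := by
    constructor
    intro s
    constructor
    · intro hs
      obtain ⟨G, ⟨hGo, hGd⟩, hGs⟩ := (hasBasis_nhdsSet _).mem_iff.1 hs
      refine Classical.byContradiction fun hno => ?_
      push_neg at hno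
      have hne : ∀ n, (closure (T n) \ G).Nonempty := by
        intro n
        rcases (closure (T n) \ G).eq_empty_or_nonempty with hemp | hne
        · exfalso
          refine hno n trivial (subset_trans ?_ hGs)
          intro p hp
          by_contra hpG
          exact absurd (diff_eq_empty.1 hemp (subset_closure hp)) hpG
        · exact hne
      have hclosed : ∀ n, IsClosed (closure (T n) \ G) := fun n =>
        isClosed_closure.sdiff hGo
      have hdec : ∀ n, closure (T (n + 1)) \ G ⊆ closure (T n) \ G := fun n =>
        diff_subset_diff_left (hTdec n)
      obtain ⟨p, hp⟩ := IsCompact.nonempty_iInter_of_sequence_nonempty_isCompact_isClosed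
        (fun n => closure (T n) \ G) hdec hne ((hclosed 0).isCompact) hclosed
      have hpdiag : p ∈ diagonal Z := by
        have : ∀ n, p ∈ W n := fun n => hTclW n (mem_iInter.1 hp n).1
        have := hWint p.1 p.2 (by simpa using this)
        exact this
      exact (mem_iInter.1 hp 0).2 (hGd hpdiag)
    · rintro ⟨n, -, hsub⟩
      exact Filter.mem_of_superset (((hTprop n).1.mem_nhdsSet).2 (hTprop n).2) hsub
  have hcg : (𝓝ˢ (diagonal Z)).IsCountablyGenerated := hbasis.isCountablyGenerated
  letI u : UniformSpace Z := uniformSpaceOfCompactR1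
  haveI : (𝓤 Z).IsCountablyGenerated := hcg
  exact UniformSpace.metrizableSpace

end QMAux

/-! ### The space `F₂(X)` with the Fell topology -/

/-- Abbreviation for the space in the theorem. -/
abbrev F2 (X : Type*) [TopologicalSpace X] : Type _ :=
  {A : CL X // ∃ x y : X, A.carrier = {x, y}}

section FellAux

open Filter Topology

variable {X : Type*} [TopologicalSpace X] [T2Space X]

/-- The closed set `{x, y}` as an element of `CL X`. -/
def mkCL (x y : X) : CL X :=
  ⟨{x, y}, ⟨x, by simp⟩, ((Set.finite_singleton y).insert x).isClosed⟩

/-- The pair `{x, y}` as an element of `F₂ X`. -/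
def prF (x y : X) : {A : CL X // ∃ x y : X, A.carrier = {x, y}} := ⟨mkCL x y, x, y, rfl⟩

/-- The singleton `{x}` as an element of `F₂ X`. -/
def sgF (x : X) : {A : CL X // ∃ x y : X, A.carrier = {x, y}} := prF x x

theorem sgF_inj {x y : X} (hxy : sgF x = sgF y) : x = y := by
  have : ({x, x} : Set X) = {y, y} := congrArg (fun A => A.1.carrier) hxy
  simp only [Set.pair_eq_singleton] at this
  exact Set.singleton_eq_singleton_iff.1 this

theorem hit_open {U : Set X} (hU : IsOpen U) (hne : U.Nonempty) :
    IsOpen {A : F2 X | (A.1.carrier ∩ U).Nonempty} := by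
  have hCL : IsOpen {A : CL X | (A.carrier ∩ U).Nonempty} :=
    TopologicalSpace.GenerateOpen.basic _ (Or.inl ⟨U, hU, hne, rfl⟩)
  exact hCL.preimage continuous_subtype_val

theorem miss_open {K : Set X} (hK : IsCompact K) (hne : K ≠ Set.univ) :
    IsOpen {A : F2 X | A.1.carrier ⊆ Kᶜ} := by
  have hCL : IsOpen {A : CL X | A.carrier ⊆ Kᶜ} :=
    TopologicalSpace.GenerateOpen.basic _ (Or.inr ⟨K, hK, hne, rfl⟩)
  exact hCL.preimage continuous_subtype_val

/-- Decomposition of a Fell-open neighborhood of a singleton. -/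
theorem fell_decomp {N : Set (F2 X)} (hN : IsOpen N) {x : X} (hx : sgF x ∈ N) :
    ∃ V C : Set X, IsOpen V ∧ x ∈ V ∧ IsCompact C ∧ Disjoint V C ∧
      ∀ y z : X, y ∈ V → z ∉ C → prF y z ∈ N := by
  obtain ⟨M, hM, rfl⟩ := isOpen_induced_iff.1 hN
  have hM' : TopologicalSpace.GenerateOpen
      ({S | ∃ U : Set X, IsOpen U ∧ U.Nonempty ∧ S = {A : CL X | (A.carrier ∩ U).Nonempty}} ∪
       {S | ∃ K : Set X, IsCompact K ∧ K ≠ Set.univ ∧ S = {A : CL X | A.carrier ⊆ Kᶜ}}) M := hM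
  have hx' : mkCL x x ∈ M := hx
  suffices H : ∀ M', TopologicalSpace.GenerateOpen
      ({S | ∃ U : Set X, IsOpen U ∧ U.Nonempty ∧ S = {A : CL X | (A.carrier ∩ U).Nonempty}} ∪
       {S | ∃ K : Set X, IsCompact K ∧ K ≠ Set.univ ∧ S = {A : CL X | A.carrier ⊆ Kᶜ}}) M' →
      mkCL x x ∈ M' →
      ∃ V C : Set X, IsOpen V ∧ x ∈ V ∧ IsCompact C ∧ Disjoint V C ∧
        ∀ y z : X, y ∈ V → z ∉ C → mkCL y z ∈ M' by
    obtain ⟨V, C, h1, h2, h3, h4, h5⟩ := H M hM' hx'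
    exact ⟨V, C, h1, h2, h3, h4, fun y z hy hz => h5 y z hy hz⟩
  intro M' hgen
  induction hgen with
  | basic s hs =>
    intro hmem
    rcases hs with ⟨U, hUo, hUne, rfl⟩ | ⟨K, hKc, hKne, rfl⟩
    · have hxU : x ∈ U := by
        obtain ⟨w, hw1, hw2⟩ := hmem
        have : w = x := by
          simpa [mkCL] using hw1
        exact this ▸ hw2
      exact ⟨U, ∅, hUo, hxU, isCompact_empty, disjoint_empty _,
        fun y z hy _ => ⟨y, by simp [mkCL], hy⟩⟩
    · have hxK : x ∉ K := by
        have : ({x, x} : Set X) ⊆ Kᶜ := hmem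
        exact this (by simp)
      refine ⟨Kᶜ, K, hKc.isClosed.isOpen_compl, hxK, hKc, disjoint_compl_left,
        fun y z hy hz => ?_⟩
      show ({y, z} : Set X) ⊆ Kᶜ
      rw [Set.insert_subset_iff]
      exact ⟨hy, by simpa using hz⟩
  | univ =>
    intro _
    exact ⟨Set.univ, ∅, isOpen_univ, Set.mem_univ x, isCompact_empty, disjoint_empty _,
      fun _ _ _ _ => Set.mem_univ _⟩
  | inter s t _ _ ihs iht =>
    intro hmem
    obtain ⟨V1, C1, hV1o, hxV1, hC1c, hd1, he1⟩ := ihs hmem.1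
    obtain ⟨V2, C2, hV2o, hxV2, hC2c, hd2, he2⟩ := iht hmem.2
    refine ⟨V1 ∩ V2, C1 ∪ C2, hV1o.inter hV2o, ⟨hxV1, hxV2⟩, hC1c.union hC2c, ?_, ?_⟩
    · exact Disjoint.union_right (hd1.mono_left inter_subset_left)
        (hd2.mono_left inter_subset_right)
    · intro y z hy hz
      exact ⟨he1 y z hy.1 fun hc => hz (Or.inl hc), he2 y z hy.2 fun hc => hz (Or.inr hc)⟩
  | sUnion S _ ih =>
    intro hmem
    obtain ⟨t, htS, hmt⟩ := hmem
    obtain ⟨V, C, h1, h2, h3, h4, h5⟩ := ih t htS hmt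
    exact ⟨V, C, h1, h2, h3, h4, fun y z hy hz => ⟨t, htS, h5 y z hy hz⟩⟩

end FellAux

theorem of_quasiMetrizable_F2_fell {X : Type*} [TopologicalSpace X] [T2Space X]
    (h : QuasiMetrizable {A : CL X // ∃ x y : X, A.carrier = {x, y}}) :
    Hemicompact X ∧ LocallyCompactSpace X ∧ TopologicalSpace.MetrizableSpace X := by
  classical
  open Filter Topology in
  obtain ⟨d, hQM, hcomp⟩ := h
  have hF2 : QMCompat d := ⟨hQM, hcomp⟩
  -- ball decomposition around singletons
  have singleBall : ∀ (a : X) (ε : ℝ), 0 < ε → ∃ V C : Set X, IsOpen V ∧ a ∈ V ∧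
      IsCompact C ∧ Disjoint V C ∧ ∀ y z : X, y ∈ V → z ∉ C → d (sgF a) (prF y z) < ε := by
    intro a ε hε
    obtain ⟨Ob, hOo, hOx, hObb⟩ := hF2.openCore (sgF a) hε
    obtain ⟨V, C, hVo, haV, hCc, hdisj, hmem⟩ := fell_decomp hOo hOx
    exact ⟨V, C, hVo, haV, hCc, hdisj, fun y z hy hz => hObb (hmem y z hy hz)⟩
  -- H1 : compact sets avoiding a fixed point are dominated by countably many compacts
  have H1 : ∀ a : X, ∃ D : ℕ → Set X, (∀ n, IsCompact (D n)) ∧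
      ∀ K : Set X, IsCompact K → a ∉ K → ∃ n, K ⊆ D n := by
    intro a
    have hb : ∀ n : ℕ, ∃ V C : Set X, IsOpen V ∧ a ∈ V ∧ IsCompact C ∧ Disjoint V C ∧
        ∀ y z : X, y ∈ V → z ∉ C → d (sgF a) (prF y z) < 1 / (n + 1) :=
      fun n => singleBall a (1 / (n + 1)) (by positivity)
    choose V C hVo haV hCc hdisj hball using hb
    refine ⟨C, hCc, ?_⟩
    intro K hKc haK
    have hKne : K ≠ Set.univ := fun hu => haK (hu ▸ Set.mem_univ a)
    have hSo := miss_open (X := X) hKc hKne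
    have hamem : sgF a ∈ {A : F2 X | A.1.carrier ⊆ Kᶜ} := by
      show ({a, a} : Set X) ⊆ Kᶜ
      simp only [Set.pair_eq_singleton, Set.singleton_subset_iff]
      exact haK
    obtain ⟨ε, hε, hbb⟩ := (hcomp _).1 hSo (sgF a) hamem
    obtain ⟨n, hn⟩ := exists_nat_one_div_lt hε
    refine ⟨n, fun w hw => ?_⟩
    by_contra hwC
    have h1 : d (sgF a) (prF a w) < ε := lt_trans (hball n a w (haV n) hwC) hn
    have h2 : ({a, w} : Set X) ⊆ Kᶜ := hbb h1
    exact h2 (by simp) hw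
  -- Hemicompactness
  have hemi : Hemicompact X := by
    rcases subsingleton_or_nontrivial X with hs | hnt
    · haveI : Finite X := Finite.of_subsingleton
      exact ⟨fun _ => Set.univ, fun _ => Set.finite_univ.isCompact,
        fun L _ => ⟨0, Set.subset_univ L⟩⟩
    · obtain ⟨x0, x1, hne⟩ := exists_pair_ne X
      obtain ⟨D0, hD0c, hD0⟩ := H1 x0
      obtain ⟨D1, hD1c, hD1⟩ := H1 x1
      obtain ⟨U0, U1, hU0o, hU1o, hx0, hx1, hdisj⟩ := t2_separation hne
      refine ⟨fun n => D0 n.unpair.1 ∪ D1 n.unpair.2,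
        fun n => (hD0c _).union (hD1c _), ?_⟩
      intro L hL
      obtain ⟨n, hn⟩ := hD0 _ (hL.diff hU0o) fun hmem => hmem.2 hx0
      obtain ⟨m, hm⟩ := hD1 _ (hL.diff hU1o) fun hmem => hmem.2 hx1
      refine ⟨Nat.pair n m, fun l hl => ?_⟩
      simp only [Nat.unpair_pair]
      by_cases hlU : l ∈ U0
      · exact Or.inr (hm ⟨hl, fun hl1 => (Set.disjoint_left.1 hdisj hlU) hl1⟩)
      · exact Or.inl (hn ⟨hl, hlU⟩)
  obtain ⟨K, hKc, hKcof⟩ := hemi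
  -- Weak local compactness
  have hwlc : ∀ x : X, ∃ s : Set X, IsCompact s ∧ s ∈ 𝓝 x := by
    intro x
    by_contra hx
    push_neg at hx
    set K' : ℕ → Set X := fun n => insert x (⋃ i ∈ Finset.range (n + 1), K i) with hK'def
    have hK'c : ∀ n, IsCompact (K' n) :=
      fun n => ((Finset.range (n + 1)).finite_toSet.isCompact_biUnion fun i _ => hKc i).insert x
    have hK'mono : ∀ m n, m ≤ n → K m ⊆ K' n := by
      intro m n hmn w hw
      exact Set.mem_insert_of_mem _
        (Set.mem_biUnion (Finset.mem_coe.2 (Finset.mem_range.2 (Nat.lt_succ_of_le hmn))) hw)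
    have hb : ∀ n : ℕ, ∃ V C : Set X, IsOpen V ∧ x ∈ V ∧ IsCompact C ∧ Disjoint V C ∧
        ∀ y z : X, y ∈ V → z ∉ C → d (sgF x) (prF y z) < 1 / (n + 1) :=
      fun n => singleBall x (1 / (n + 1)) (by positivity)
    choose V C hVo hxV hCc hdisj hball using hb
    have hz : ∀ n : ℕ, ∃ z, z ∈ V n ∧ z ∉ K' n := by
      intro n
      by_contra hzn
      push_neg at hzn
      exact hx (K' n) (hK'c n) (Filter.mem_of_superset ((hVo n).mem_nhds (hxV n)) hzn)
    choose z hzV hzK using hz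
    have hdz : ∀ n, d (sgF x) (sgF (z n)) < 1 / (n + 1) := fun n =>
      hball n (z n) (z n) (hzV n) (Set.disjoint_left.1 (hdisj n) (hzV n))
    have htend : Filter.Tendsto z Filter.atTop (𝓝 x) := by
      rw [tendsto_nhds]
      intro W hWo hxW
      have hmem' : sgF x ∈ {A : F2 X | (A.1.carrier ∩ W).Nonempty} :=
        ⟨x, by simp [sgF, prF, mkCL], hxW⟩
      obtain ⟨ε, hε, hbb⟩ := (hcomp _).1 (hit_open hWo ⟨x, hxW⟩) (sgF x) hmem'
      obtain ⟨n0, hn0⟩ := exists_nat_one_div_lt hε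
      filter_upwards [Filter.eventually_ge_atTop n0] with n hn
      have hle : (1 : ℝ) / (n + 1) ≤ 1 / (n0 + 1) := by
        have hcast : (n0 : ℝ) + 1 ≤ (n : ℝ) + 1 := by
          have := (Nat.cast_le (α := ℝ)).2 hn
          linarith
        exact one_div_le_one_div_of_le (by positivity) hcast
      have : d (sgF x) (sgF (z n)) < ε := ((hdz n).trans_le hle).trans hn0
      obtain ⟨w, hw1, hw2⟩ := hbb this
      have hwz : w = z n := by simpa [sgF, prF, mkCL] using hw1
      have : z n ∈ W := by rw [← hwz]; exact hw2
      exact this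
    have hLc : IsCompact (insert x (Set.range z)) := htend.isCompact_insert_range
    obtain ⟨m, hm⟩ := hKcof _ hLc
    exact hzK m (hK'mono m m le_rfl (hm (Set.mem_insert_of_mem _ ⟨m, rfl⟩)))
  haveI hwlcI : WeaklyLocallyCompactSpace X := ⟨hwlc⟩
  haveI hlc : LocallyCompactSpace X := WeaklyLocallyCompactSpace.locallyCompactSpace
  -- quasi-metric on X itself
  have hdX : QMCompat (fun x y : X => d (sgF x) (sgF y)) := by
    constructor
    · exact ⟨fun x y => hQM.1 _ _,
        fun x y => (hQM.2.1 _ _).trans ⟨sgF_inj, fun hxy => by rw [hxy]⟩,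
        fun x y z => hQM.2.2 _ _ _⟩
    · intro s
      constructor
      · intro hs x hx
        have hmem' : sgF x ∈ {A : F2 X | (A.1.carrier ∩ s).Nonempty} :=
          ⟨x, by simp [sgF, prF, mkCL], hx⟩
        obtain ⟨ε, hε, hbb⟩ := (hcomp _).1 (hit_open hs ⟨x, hx⟩) (sgF x) hmem'
        refine ⟨ε, hε, fun y hy => ?_⟩
        obtain ⟨w, hw1, hw2⟩ := hbb hy
        have hwz : w = y := by simpa [sgF, prF, mkCL] using hw1
        exact hwz ▸ hw2
      · intro hs
        rw [isOpen_iff_forall_mem_open]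
        intro x hx
        obtain ⟨ε, hε, hbb⟩ := hs x hx
        obtain ⟨Ob, hOo, hOx, hObb⟩ := hF2.openCore (sgF x) hε
        obtain ⟨V, C, hVo, hxV, hCc, hdisjVC, hmem⟩ := fell_decomp hOo hOx
        refine ⟨V, fun y hy => hbb ?_, hVo, hxV⟩
        exact hObb (hmem y y hy (Set.disjoint_left.1 hdisjVC hy))
  -- metrizability
  haveI : RegularSpace X := inferInstance
  haveI : T3Space X := inferInstance
  have hUcover : ⋃ n, interior (K n) = Set.univ := by
    ext x
    simp only [Set.mem_iUnion, Set.mem_univ, iff_true]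
    obtain ⟨s, hsc, hsx⟩ := hwlc x
    obtain ⟨n, hn⟩ := hKcof s hsc
    exact ⟨n, interior_mono hn (mem_interior_iff_mem_nhds.2 hsx)⟩
  haveI hsc : ∀ n : ℕ, SecondCountableTopology (interior (K n)) := by
    intro n
    haveI : CompactSpace (K n) := isCompact_iff_compactSpace.1 (hKc n)
    haveI : MetrizableSpace (K n) := (hdX.restrict (K n)).metrizableSpace
    letI := TopologicalSpace.metrizableSpaceMetric (K n)
    exact (Topology.IsEmbedding.inclusion interior_subset).secondCountableTopology
  haveI : SecondCountableTopology X :=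
    TopologicalSpace.secondCountableTopology_of_countable_cover
      (fun n => isOpen_interior) hUcover
  exact ⟨⟨K, hKc, hKcof⟩, hlc, inferInstance⟩
end
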